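/- Let the map f from the free group on x₁,…,x₂₄ to the trefoil group G(T) = ⟨y₁, y₂ | y₁y₂y₁ = y₂y₁y₂⟩ be defined by f(x₁) = y₁y₂y₁⁻¹y₂y₁⁻¹, f(x₆) = y₁y₂⁻¹y₁y₂y₁⁻¹y₂y₁⁻¹y₂y₁⁻¹, f(x₁₈) = y₂²y₁⁻¹. Then f(x₁₈ x₆ x₁⁻¹ x₁⁻¹ x₁₈ x₆ x₁⁻¹) = y₁ and f(x₁ x₆⁻¹ x₁₈⁻¹ x₁ x₁₈ x₆ x₁⁻² x₁₈ x₆ x₁⁻¹) = y₂ in G(T). -/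

import Mathlib

/-- The relator set of the trefoil knot group `⟨y₁, y₂ | y₁y₂y₁ = y₂y₁y₂⟩`,
with `y₁ = of true`, `y₂ = of false`. -/
def trefoilRels : Set (FreeGroup Bool) :=
  { FreeGroup.of true * FreeGroup.of false * FreeGroup.of true *
    (FreeGroup.of false * FreeGroup.of true * FreeGroup.of false)⁻¹ }

theorem stmt_17 (y₁ y₂ fx₁ fx₆ fx₁₈ : PresentedGroup trefoilRels)
    (hy₁ : y₁ = PresentedGroup.of true) (hy₂ : y₂ = PresentedGroup.of false)
    (hfx₁ : fx₁ = y₁ * y₂ * y₁⁻¹ * y₂ * y₁⁻¹)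
    (hfx₆ : fx₆ = y₁ * y₂⁻¹ * y₁ * y₂ * y₁⁻¹ * y₂ * y₁⁻¹ * y₂ * y₁⁻¹)
    (hfx₁₈ : fx₁₈ = y₂ ^ 2 * y₁⁻¹) :
    fx₁₈ * fx₆ * fx₁⁻¹ * fx₁⁻¹ * fx₁₈ * fx₆ * fx₁⁻¹ = y₁ ∧
    fx₁ * fx₆⁻¹ * fx₁₈⁻¹ * fx₁ * fx₁₈ * fx₆ * fx₁⁻¹ * fx₁⁻¹ * fx₁₈ * fx₆ * fx₁⁻¹ = y₂ := by
  subst hfx₁ hfx₆ hfx₁₈ hy₁ hy₂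
  set a : PresentedGroup trefoilRels := PresentedGroup.of true with ha
  set b : PresentedGroup trefoilRels := PresentedGroup.of false with hb
  have hrel : (PresentedGroup.mk trefoilRels (FreeGroup.of true * FreeGroup.of false *
      FreeGroup.of true * (FreeGroup.of false * FreeGroup.of true * FreeGroup.of false)⁻¹)) = 1 := by
    apply (QuotientGroup.eq_one_iff _).mpr
    exact Subgroup.subset_normalClosure rfl
  have h : a * b * a = b * a * b := by
    have h2 : a * b * a * (b * a * b)⁻¹ = 1 := by
      have h3 := hrel; simp only [map_mul, map_inv] at h3; exact h3
    exact mul_inv_eq_one.mp h2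
  have hcore : b * a * b * (a * b * a)⁻¹ = 1 := by rw [← h]; group
  have hcore' : a * b * a * (b * a * b)⁻¹ = 1 := by rw [h]; group
  refine ⟨?_, ?_⟩
  · calc _ = b * a * b * a⁻¹ * b⁻¹ * a * b⁻¹ * a⁻¹ * b * a * b * a⁻¹ * a⁻¹ := by group
    _ = b * a * b * a⁻¹ * b⁻¹ := by
        have e : b * a * b * a⁻¹ * b⁻¹ * a * b⁻¹ * a⁻¹ * b * a * b * a⁻¹ * a⁻¹ = (b * a * b * a⁻¹ * b⁻¹ * a * a * b⁻¹ * a⁻¹ * b⁻¹) * (b * a * b * (a * b * a)⁻¹) * (b * a * b * a⁻¹ * b⁻¹ * a * a * b⁻¹ * a⁻¹ * b⁻¹)⁻¹ * (b * a * b * a⁻¹ * b⁻¹) := by group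
        rw [e, hcore]; group
    _ = a := by
        have e : b * a * b * a⁻¹ * b⁻¹ = (b * a * b * (a * b * a)⁻¹) * (a) := by group
        rw [e, hcore]; group
  · calc _ = a * a * b⁻¹ * a⁻¹ * b⁻¹ * a * b * a⁻¹ * b * a⁻¹ * b * a * b * a⁻¹ * b⁻¹ * a * b⁻¹ * a⁻¹ * b * a * b * a⁻¹ * a⁻¹ := by group
    _ = a * a * b⁻¹ * a⁻¹ * b⁻¹ * a * b * a⁻¹ * b * a⁻¹ * b * a * b * a⁻¹ * b⁻¹ := by
        have e : a * a * b⁻¹ * a⁻¹ * b⁻¹ * a * b * a⁻¹ * b * a⁻¹ * b * a * b * a⁻¹ * b⁻¹ * a * b⁻¹ * a⁻¹ * b * a * b * a⁻¹ * a⁻¹ = (a * a * b⁻¹ * a⁻¹ * b⁻¹ * a * b * a⁻¹ * b * a⁻¹ * b * a * b * a⁻¹ * b⁻¹ * a * a * b⁻¹ * a⁻¹ * b⁻¹) * (b * a * b * (a * b * a)⁻¹) * (a * a * b⁻¹ * a⁻¹ * b⁻¹ * a * b * a⁻¹ * b * a⁻¹ * b * a * b * a⁻¹ * b⁻¹ *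 a * a * b⁻¹ * a⁻¹ * b⁻¹)⁻¹ * (a * a * b⁻¹ * a⁻¹ * b⁻¹ * a * b * a⁻¹ * b * a⁻¹ * b * a * b * a⁻¹ * b⁻¹) := by group
        rw [e, hcore]; group
    _ = b * a⁻¹ * b * a * b * a⁻¹ * b⁻¹ := by
        have e : a * a * b⁻¹ * a⁻¹ * b⁻¹ * a * b * a⁻¹ * b * a⁻¹ * b * a * b * a⁻¹ * b⁻¹ = (a * b⁻¹ * a⁻¹) * (a * b * a * (b * a * b)⁻¹) * (a * b⁻¹ * a⁻¹)⁻¹ * (b * a⁻¹ * b * a * b * a⁻¹ * b⁻¹) := by group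
        rw [e, hcore']; group
    _ = b := by
        have e : b * a⁻¹ * b * a * b * a⁻¹ * b⁻¹ = (b * b * a * b⁻¹ * a⁻¹ * b⁻¹) * (b * a * b * (a * b * a)⁻¹) * (b * b * a * b⁻¹ * a⁻¹ * b⁻¹)⁻¹ * (b) := by group
        rw [e, hcore]; group
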